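/- Let E be a directed graph that is the disjoint union of two subgraphs E₁ and E₂ such that both G(E₁) and G(E₂) are infinite. Then the topology on G(E) in which every nonzero element is isolated and the neighborhoods of 0 are the sets {0} ∪ (C ∩ G(E₁)\{0}) for cofinite subsets C of G(E₁), makes G(E) a Hausdorff locally compact, non-compact, non-discrete quasi-topological semigroup (separately continuous multiplication and continuous inversion). -/

import Mathlib

/-- A directed graph: vertices, edges, source and range maps. -/
structure DGraph where
  V : Type
  E : Type
  s : E → V
  r : E → V

namespace DGraph

variable {Q : DGraph}

/-- `pOk Q a l` : the list of edges `l` forms a valid path starting at vertex `a`. -/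
def pOk (Q : DGraph) : Q.V → List Q.E → Prop
  | _, [] => True
  | a, e :: l => Q.s e = a ∧ pOk Q (Q.r e) l

/-- The end vertex of an edge-list starting at `a`. -/
def pRng (Q : DGraph) (a : Q.V) (l : List Q.E) : Q.V :=
  l.foldl (fun _ e => Q.r e) a

theorem pRng_append (a : Q.V) (l₁ l₂ : List Q.E) :
    pRng Q a (l₁ ++ l₂) = pRng Q (pRng Q a l₁) l₂ :=
  List.foldl_append

theorem pOk_append {a : Q.V} {l₁ l₂ : List Q.E} (h₁ : pOk Q a l₁)
    (h₂ : pOk Q (pRng Q a l₁) l₂) : pOk Q a (l₁ ++ l₂) := by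
  induction l₁ generalizing a with
  | nil => simpa [pRng] using h₂
  | cons e l ih =>
      obtain ⟨he, hl⟩ := h₁
      exact ⟨he, ih hl h₂⟩

theorem pOk_drop {a : Q.V} {l₁ l₂ : List Q.E} (h : pOk Q a (l₁ ++ l₂)) :
    pOk Q (pRng Q a l₁) l₂ := by
  induction l₁ generalizing a with
  | nil => simpa [pRng] using h
  | cons e l ih => exact ih h.2

/-- A (finite, directed) path in the graph `Q`: a start vertex together with a
compatible list of edges.  Paths of length `0` are vertices. -/
structure GPath (Q : DGraph) where
  start : Q.V
  edges : List Q.E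
  ok : pOk Q start edges

/-- The source `s(p)` of a path. -/
def GPath.src (p : GPath Q) : Q.V := p.start

/-- The range `r(p)` of a path. -/
def GPath.rng (p : GPath Q) : Q.V := pRng Q p.start p.edges

/-- The length `|p|` of a path. -/
def GPath.length (p : GPath Q) : ℕ := p.edges.length

/-- The trivial (length zero) path at a vertex `a`. -/
def GPath.triv (Q : DGraph) (a : Q.V) : GPath Q := ⟨a, [], trivial⟩

/-- Concatenation of composable paths. -/
def GPath.comp (p q : GPath Q) (h : p.rng = q.start) : GPath Q :=
  ⟨p.start, p.edges ++ q.edges, pOk_append p.ok (by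
    have hq := q.ok
    rw [← h] at hq
    exact hq)⟩

theorem GPath.comp_rng (p q : GPath Q) (h : p.rng = q.start) :
    (p.comp q h).rng = q.rng := by
  show pRng Q p.start (p.edges ++ q.edges) = q.rng
  rw [pRng_append, show pRng Q p.start p.edges = q.start from h]
  rfl

theorem exists_sub {p q : GPath Q} (h1 : q.start = p.start)
    (h2 : p.edges <+: q.edges) :
    ∃ w : GPath Q, w.start = p.rng ∧ w.rng = q.rng ∧ p.edges ++ w.edges = q.edges := by
  obtain ⟨t, ht⟩ := h2
  have hok : pOk Q p.start (p.edges ++ t) := by rw [ht, ← h1]; exact q.ok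
  refine ⟨⟨p.rng, t, pOk_drop hok⟩, rfl, ?_, ht⟩
  show pRng Q (pRng Q p.start p.edges) t = pRng Q q.start q.edges
  rw [← pRng_append, ht, ← h1]

/-- If the path `q` decomposes as `p·w`, this is the path `w`. -/
noncomputable def subPath (p q : GPath Q) (h1 : q.start = p.start)
    (h2 : p.edges <+: q.edges) : GPath Q :=
  (exists_sub h1 h2).choose

theorem subPath_spec (p q : GPath Q) (h1 : q.start = p.start)
    (h2 : p.edges <+: q.edges) :
    (subPath p q h1 h2).start = p.rng ∧ (subPath p q h1 h2).rng = q.rng ∧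
      p.edges ++ (subPath p q h1 h2).edges = q.edges :=
  (exists_sub h1 h2).choose_spec

/-- The graph inverse semigroup `G(E)` over the graph `Q`: the element `0`
together with the elements `u v⁻¹` where `u, v` are paths with `r(u) = r(v)`. -/
inductive GIS (Q : DGraph) : Type
  | zero : GIS Q
  | elm (u v : GPath Q) (h : u.rng = v.rng) : GIS Q

instance : Zero (GIS Q) := ⟨GIS.zero⟩

-- Multiplication in the graph inverse semigroup:
-- `u₁v₁⁻¹ · u₂v₂⁻¹ = u₁wv₂⁻¹` if `u₂ = v₁w`, `u₁(v₂w)⁻¹` if `v₁ = u₂w`, `0` otherwise.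
open Classical in
noncomputable def GIS.mul : GIS Q → GIS Q → GIS Q
  | .zero, _ => .zero
  | _, .zero => .zero
  | .elm u₁ v₁ h₁, .elm u₂ v₂ h₂ =>
    if hA : u₂.start = v₁.start ∧ v₁.edges <+: u₂.edges then
      GIS.elm (u₁.comp (subPath v₁ u₂ hA.1 hA.2)
          (by rw [(subPath_spec v₁ u₂ hA.1 hA.2).1, h₁]))
        v₂
        (by rw [GPath.comp_rng, (subPath_spec v₁ u₂ hA.1 hA.2).2.1, h₂])
    else if hB : v₁.start = u₂.start ∧ u₂.edges <+: v₁.edges then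
      GIS.elm u₁
        (v₂.comp (subPath u₂ v₁ hB.1 hB.2)
          (by rw [(subPath_spec u₂ v₁ hB.1 hB.2).1, h₂]))
        (by rw [GPath.comp_rng, (subPath_spec u₂ v₁ hB.1 hB.2).2.1, h₁])
    else .zero

noncomputable instance : Mul (GIS Q) := ⟨GIS.mul⟩

/-- The inversion map of the graph inverse semigroup: `(uv⁻¹)⁻¹ = vu⁻¹`, `0⁻¹ = 0`. -/
def GIS.inv : GIS Q → GIS Q
  | .zero => .zero
  | .elm u v h => .elm v u h.symm

/-- The canonical identification of a path `u` with the element `u · r(u)⁻¹` of `G(E)`. -/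
def toGIS (p : GPath Q) : GIS Q := GIS.elm p (GPath.triv Q p.rng) rfl

end DGraph


open DGraph in
/-- The disjoint union of two directed graphs. -/
def dUnion (Q₁ Q₂ : DGraph) : DGraph :=
  ⟨Q₁.V ⊕ Q₂.V, Q₁.E ⊕ Q₂.E, Sum.map Q₁.s Q₂.s, Sum.map Q₁.r Q₂.r⟩

open DGraph in
/-- The elements of `G(E₁ ⊔ E₂)` lying in the copy of `G(E₁)` (together with `0`). -/
def inLeft (Q₁ Q₂ : DGraph) : GIS (dUnion Q₁ Q₂) → Prop
  | .zero => True
  | .elm u _ _ => ∃ a, u.start = Sum.inl a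

open DGraph in
/-- The topology on `G(E₁ ⊔ E₂)` in which every nonzero element is isolated and the
neighborhoods of `0` are the sets `{0} ∪ (C ∩ (G(E₁) \ {0}))` for cofinite `C ⊆ G(E₁)`. -/
def dTop (Q₁ Q₂ : DGraph) : TopologicalSpace (GIS (dUnion Q₁ Q₂)) where
  IsOpen U := (0 : GIS (dUnion Q₁ Q₂)) ∈ U → {x | inLeft Q₁ Q₂ x ∧ x ∉ U}.Finite
  isOpen_univ := fun _ => by simp
  isOpen_inter := fun U V hU hV h => by
    refine ((hU h.1).union (hV h.2)).subset ?_
    rintro x ⟨hl, hx⟩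
    by_cases hxU : x ∈ U
    · exact Or.inr ⟨hl, fun hv => hx ⟨hxU, hv⟩⟩
    · exact Or.inl ⟨hl, hxU⟩
  isOpen_sUnion := fun S hS h => by
    obtain ⟨U, hUS, h0U⟩ := h
    refine (hS U hUS h0U).subset ?_
    rintro x ⟨hl, hx⟩
    exact ⟨hl, fun hU => hx ⟨U, hUS, hU⟩⟩

open DGraph
open DGraph
variable {Q : DGraph}

theorem GPath.ext' {p q : GPath Q} (h1 : p.start = q.start) (h2 : p.edges = q.edges) : p = q := by
  cases p; cases q; simp_all

theorem elm_ext {u v u' v' : GPath Q} {h : u.rng = v.rng} {h' : u'.rng = v'.rng}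
    (e1 : u = u') (e2 : v = v') : GIS.elm u v h = GIS.elm u' v' h' := by
  subst e1; subst e2; rfl

theorem mul_def (a b : GIS Q) : a * b = GIS.mul a b := rfl

@[simp] theorem zero_mul' (a : GIS Q) : (0 : GIS Q) * a = 0 := by cases a <;> rfl

@[simp] theorem mul_zero' (a : GIS Q) : a * (0 : GIS Q) = 0 := by
  cases a <;> rfl

theorem elm_ne_zero {u v : GPath Q} {h : u.rng = v.rng} : GIS.elm u v h ≠ 0 :=
  fun hh => by cases hh

@[simp] theorem inv_inv' (a : GIS Q) : a.inv.inv = a := by cases a <;> rfl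

open Classical in
theorem mul_elm_elm (u₁ v₁ : GPath Q) (h₁ : u₁.rng = v₁.rng) (u₂ v₂ : GPath Q)
    (h₂ : u₂.rng = v₂.rng) :
    GIS.elm u₁ v₁ h₁ * GIS.elm u₂ v₂ h₂ =
    (if hA : u₂.start = v₁.start ∧ v₁.edges <+: u₂.edges then
      GIS.elm (u₁.comp (subPath v₁ u₂ hA.1 hA.2)
          (by rw [(subPath_spec v₁ u₂ hA.1 hA.2).1, h₁]))
        v₂
        (by rw [GPath.comp_rng, (subPath_spec v₁ u₂ hA.1 hA.2).2.1, h₂])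
    else if hB : v₁.start = u₂.start ∧ u₂.edges <+: v₁.edges then
      GIS.elm u₁
        (v₂.comp (subPath u₂ v₁ hB.1 hB.2)
          (by rw [(subPath_spec u₂ v₁ hB.1 hB.2).1, h₂]))
        (by rw [GPath.comp_rng, (subPath_spec u₂ v₁ hB.1 hB.2).2.1, h₁])
    else 0) := rfl

@[simp] theorem comp_edges (p q : GPath Q) (h : p.rng = q.start) :
    (p.comp q h).edges = p.edges ++ q.edges := rfl

@[simp] theorem comp_start (p q : GPath Q) (h : p.rng = q.start) :
    (p.comp q h).start = p.start := rfl

theorem comp_nil {p q : GPath Q} (h : p.rng = q.start) (hq : q.edges = []) :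
    p.comp q h = p := GPath.ext' rfl (by simp [hq])

theorem zmul (a : GIS Q) : GIS.zero * a = 0 := zero_mul' a
theorem mulz (a : GIS Q) : a * GIS.zero = 0 := mul_zero' a

def lenU : GIS Q → ℕ | .zero => 0 | .elm u _ _ => u.edges.length
def lenV : GIS Q → ℕ | .zero => 0 | .elm _ v _ => v.edges.length

theorem mul_len_bound {a x p : GIS Q} (hp : p ≠ 0) (h : a * x = p) :
    lenU x ≤ lenV a + lenU p := by
  cases a with
  | zero => rw [zmul] at h; exact absurd h.symm hp
  | elm u₁ v₁ h₁ =>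
    cases x with
    | zero => exact Nat.zero_le _
    | elm u₂ v₂ h₂ =>
      rw [mul_elm_elm] at h
      split_ifs at h with hA hB
      · subst h
        have spec := subPath_spec v₁ u₂ hA.1 hA.2
        have hu2 : v₁.edges.length + (subPath v₁ u₂ hA.1 hA.2).edges.length
            = u₂.edges.length := by
          have := congrArg List.length spec.2.2
          simpa using this
        simp only [lenU, lenV, comp_edges, List.length_append]
        omega
      · subst h
        have := hB.2.length_le
        simp only [lenU, lenV]
        omega
      · exact absurd h.symm hp

theorem mul_determines {a x x' p : GIS Q} (hp : p ≠ 0) (h : a * x = p) (h' : a * x' = p)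
    (hlen : lenU x = lenU x') : x = x' := by
  cases a with
  | zero => rw [zmul] at h; exact absurd h.symm hp
  | elm u₁ v₁ h₁ =>
  cases x with
  | zero => rw [mulz] at h; exact absurd h.symm hp
  | elm u₂ v₂ h₂ =>
  cases x' with
  | zero => rw [mulz] at h'; exact absurd h'.symm hp
  | elm u₂' v₂' h₂' =>
  rw [mul_elm_elm] at h h'
  simp only [lenU] at hlen
  split_ifs at h with hA hB
  · have spec := subPath_spec v₁ u₂ hA.1 hA.2
    split_ifs at h' with hA' hB'
    · -- A/A
      have spec' := subPath_spec v₁ u₂' hA'.1 hA'.2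
      have e := h.trans h'.symm
      simp only [GIS.elm.injEq] at e
      have ec0 : u₁.edges ++ (subPath v₁ u₂ hA.1 hA.2).edges
          = u₁.edges ++ (subPath v₁ u₂' hA'.1 hA'.2).edges := by
        have := congrArg GPath.edges e.1
        simpa using this
      have ew := List.append_cancel_left ec0
      refine elm_ext (GPath.ext' (hA.1.trans hA'.1.symm) ?_) e.2
      exact spec.2.2.symm.trans (by rw [ew]; exact spec'.2.2)
    · -- A/B
      have spec' := subPath_spec u₂' v₁ hB'.1 hB'.2
      have hu2 : v₁.edges.length + (subPath v₁ u₂ hA.1 hA.2).edges.length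
          = u₂.edges.length := by
        have := congrArg List.length spec.2.2; simpa using this
      have hle : u₂'.edges.length ≤ v₁.edges.length := hB'.2.length_le
      have hw0 : (subPath v₁ u₂ hA.1 hA.2).edges = [] :=
        List.length_eq_zero_iff.mp (by omega)
      have hw0' : (subPath u₂' v₁ hB'.1 hB'.2).edges = [] :=
        List.length_eq_zero_iff.mp (by
          have := congrArg List.length spec'.2.2
          simp only [List.length_append] at this
          omega)
      have e := h.trans h'.symm
      simp only [GIS.elm.injEq] at e
      refine elm_ext (GPath.ext' (hA.1.trans hB'.1) ?_)
        (e.2.trans (comp_nil _ hw0'))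
      have e1 : u₂.edges = v₁.edges := by
        have := spec.2.2.symm
        rwa [hw0, List.append_nil] at this
      have e2 : u₂'.edges = v₁.edges := by
        have := spec'.2.2
        rwa [hw0', List.append_nil] at this
      rw [e1, e2]
    · exact absurd h'.symm hp
  · have spec := subPath_spec u₂ v₁ hB.1 hB.2
    split_ifs at h' with hA' hB'
    · -- B/A
      have spec' := subPath_spec v₁ u₂' hA'.1 hA'.2
      have hu2' : v₁.edges.length + (subPath v₁ u₂' hA'.1 hA'.2).edges.length
          = u₂'.edges.length := by
        have := congrArg List.length spec'.2.2; simpa using this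
      have hle : u₂.edges.length ≤ v₁.edges.length := hB.2.length_le
      have hw0' : (subPath v₁ u₂' hA'.1 hA'.2).edges = [] :=
        List.length_eq_zero_iff.mp (by omega)
      have hw0 : (subPath u₂ v₁ hB.1 hB.2).edges = [] :=
        List.length_eq_zero_iff.mp (by
          have := congrArg List.length spec.2.2
          simp only [List.length_append] at this
          omega)
      have e := h.trans h'.symm
      simp only [GIS.elm.injEq] at e
      refine elm_ext (GPath.ext' (hB.1.symm.trans hA'.1.symm) ?_)
        ((comp_nil _ hw0).symm.trans e.2)
      have e1 : u₂.edges = v₁.edges := by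
        have := spec.2.2
        rwa [hw0, List.append_nil] at this
      have e2 : u₂'.edges = v₁.edges := by
        have := spec'.2.2.symm
        rwa [hw0', List.append_nil] at this
      rw [e1, e2]
    · -- B/B
      have spec' := subPath_spec u₂' v₁ hB'.1 hB'.2
      have eu : u₂.edges = u₂'.edges := by
        rw [List.prefix_iff_eq_take.mp hB.2, List.prefix_iff_eq_take.mp hB'.2, hlen]
      have ew : (subPath u₂ v₁ hB.1 hB.2).edges = (subPath u₂' v₁ hB'.1 hB'.2).edges := by
        apply List.append_cancel_left (as := u₂.edges)
        rw [spec.2.2, eu]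
        exact spec'.2.2.symm
      have e := h.trans h'.symm
      simp only [GIS.elm.injEq] at e
      have ec := e.2
      have ev : v₂.edges = v₂'.edges := by
        have := congrArg GPath.edges ec
        simp only [comp_edges, ew] at this
        exact List.append_cancel_right this
      refine elm_ext (GPath.ext' (hB.1.symm.trans hB'.1) eu) (GPath.ext' ?_ ev)
      have := congrArg GPath.start ec
      simpa using this
    · exact absurd h'.symm hp
  · exact absurd h.symm hp

theorem fiber_finite (a p : GIS Q) (hp : p ≠ 0) : {x | a * x = p}.Finite := by
  apply Set.Finite.of_finite_image (f := lenU) ?_ ?_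
  · apply (Set.finite_Iic (lenV a + lenU p)).subset
    rintro n ⟨x, hx, rfl⟩
    exact mul_len_bound hp hx
  · intro x hx y hy hxy
    exact mul_determines hp hx hy hxy

theorem pRng_cons (a : Q.V) (e : Q.E) (l : List Q.E) :
    pRng Q a (e :: l) = pRng Q (Q.r e) l := rfl

theorem gmul_inv (x y : GIS Q) : (x * y).inv = y.inv * x.inv := by
  cases x with
  | zero =>
    rw [zmul]
    show GIS.zero = y.inv * GIS.zero
    rw [mulz]; rfl
  | elm u₁ v₁ h₁ =>
    cases y with
    | zero =>
      rw [mulz]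
      show GIS.zero = GIS.zero * _
      rw [zmul]; rfl
    | elm u₂ v₂ h₂ =>
      simp only [GIS.inv]
      rw [mul_elm_elm, mul_elm_elm]
      split_ifs with hP hQ
      · -- both prefix relations hold
        have spec := subPath_spec v₁ u₂ hP.1 hP.2
        have spec' := subPath_spec u₂ v₁ hQ.1 hQ.2
        have hw0 : (subPath v₁ u₂ hP.1 hP.2).edges = [] := by
          apply List.length_eq_zero_iff.mp
          have e1 := congrArg List.length spec.2.2
          simp only [List.length_append] at e1
          have := hQ.2.length_le
          omega
        have hw0' : (subPath u₂ v₁ hQ.1 hQ.2).edges = [] := by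
          apply List.length_eq_zero_iff.mp
          have e1 := congrArg List.length spec'.2.2
          simp only [List.length_append] at e1
          have := hP.2.length_le
          omega
        simp only [GIS.inv]
        exact elm_ext (comp_nil _ hw0').symm (comp_nil _ hw0)
      · rfl
      · rfl
      · rfl

variable {Q₁ Q₂ : DGraph}

theorem pOk_rng_isLeft (l : List (dUnion Q₁ Q₂).E) (v : (dUnion Q₁ Q₂).V)
    (h : pOk (dUnion Q₁ Q₂) v l) : (pRng (dUnion Q₁ Q₂) v l).isLeft = v.isLeft := by
  induction l generalizing v with
  | nil => rfl
  | cons e l ih =>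
    obtain ⟨hs, hl⟩ := h
    rw [pRng_cons]
    rw [ih _ hl]
    cases e with
    | inl e => rw [← hs]; rfl
    | inr e => rw [← hs]; rfl

theorem rng_isLeft (p : GPath (dUnion Q₁ Q₂)) : p.rng.isLeft = p.start.isLeft :=
  pOk_rng_isLeft p.edges p.start p.ok

theorem inLeft_elm {u v : GPath (dUnion Q₁ Q₂)} {h : u.rng = v.rng} :
    inLeft Q₁ Q₂ (GIS.elm u v h) ↔ u.start.isLeft := by
  show (∃ a, u.start = Sum.inl a) ↔ _
  exact Sum.isLeft_iff.symm

theorem inLeft_mul (a x : GIS (dUnion Q₁ Q₂)) (hx : inLeft Q₁ Q₂ x) :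
    inLeft Q₁ Q₂ (a * x) := by
  cases a with
  | zero => rw [zmul]; trivial
  | elm u₁ v₁ h₁ =>
    cases x with
    | zero => rw [mulz]; trivial
    | elm u₂ v₂ h₂ =>
      rw [inLeft_elm] at hx
      rw [mul_elm_elm]
      split_ifs with hA hB
      · rw [inLeft_elm]
        show (u₁.comp _ _).start.isLeft = true
        rw [comp_start, ← rng_isLeft u₁, h₁, rng_isLeft v₁, ← hA.1]
        exact hx
      · rw [inLeft_elm]
        rw [← rng_isLeft u₁, h₁, rng_isLeft v₁, hB.1]
        exact hx
      · trivial

theorem inLeft_inv (x : GIS (dUnion Q₁ Q₂)) :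
    inLeft Q₁ Q₂ x.inv ↔ inLeft Q₁ Q₂ x := by
  cases x with
  | zero => exact Iff.rfl
  | elm u v h =>
    show inLeft Q₁ Q₂ (GIS.elm v u h.symm) ↔ _
    rw [inLeft_elm, inLeft_elm, ← rng_isLeft v, ← h, rng_isLeft u]

-- lifts
theorem pOk_map_inr (l : List Q₂.E) (a : Q₂.V) (h : pOk Q₂ a l) :
    pOk (dUnion Q₁ Q₂) (Sum.inr a) (l.map Sum.inr) := by
  induction l generalizing a with
  | nil => trivial
  | cons e l ih => exact ⟨congrArg Sum.inr h.1, ih _ h.2⟩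

theorem pRng_map_inr (l : List Q₂.E) (a : Q₂.V) :
    pRng (dUnion Q₁ Q₂) (Sum.inr a) (l.map Sum.inr) = Sum.inr (pRng Q₂ a l) := by
  induction l generalizing a with
  | nil => rfl
  | cons e l ih => exact ih _

theorem pOk_map_inl (l : List Q₁.E) (a : Q₁.V) (h : pOk Q₁ a l) :
    pOk (dUnion Q₁ Q₂) (Sum.inl a) (l.map Sum.inl) := by
  induction l generalizing a with
  | nil => trivial
  | cons e l ih => exact ⟨congrArg Sum.inl h.1, ih _ h.2⟩

theorem pRng_map_inl (l : List Q₁.E) (a : Q₁.V) :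
    pRng (dUnion Q₁ Q₂) (Sum.inl a) (l.map Sum.inl) = Sum.inl (pRng Q₁ a l) := by
  induction l generalizing a with
  | nil => rfl
  | cons e l ih => exact ih _

def liftR (p : GPath Q₂) : GPath (dUnion Q₁ Q₂) :=
  ⟨Sum.inr p.start, p.edges.map Sum.inr, pOk_map_inr _ _ p.ok⟩

def liftL (p : GPath Q₁) : GPath (dUnion Q₁ Q₂) :=
  ⟨Sum.inl p.start, p.edges.map Sum.inl, pOk_map_inl _ _ p.ok⟩

theorem liftR_inj : Function.Injective (liftR (Q₁ := Q₁) (Q₂ := Q₂)) := by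
  intro p q h
  refine GPath.ext' ?_ ?_
  · have := congrArg GPath.start h
    exact Sum.inr_injective this
  · have := congrArg GPath.edges h
    exact List.map_injective_iff.mpr Sum.inr_injective this

theorem liftL_inj : Function.Injective (liftL (Q₁ := Q₁) (Q₂ := Q₂)) := by
  intro p q h
  refine GPath.ext' ?_ ?_
  · have := congrArg GPath.start h
    exact Sum.inl_injective this
  · have := congrArg GPath.edges h
    exact List.map_injective_iff.mpr Sum.inl_injective this

theorem liftR_rng (p : GPath Q₂) : (liftR (Q₁ := Q₁) p).rng = Sum.inr p.rng :=
  pRng_map_inr p.edges p.start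

theorem liftL_rng (p : GPath Q₁) : (liftL (Q₂ := Q₂) p).rng = Sum.inl p.rng :=
  pRng_map_inl p.edges p.start

def liftRG : GIS Q₂ → GIS (dUnion Q₁ Q₂)
  | .zero => .zero
  | .elm u v h => .elm (liftR u) (liftR v)
      (by rw [liftR_rng, liftR_rng, h])

def liftLG : GIS Q₁ → GIS (dUnion Q₁ Q₂)
  | .zero => .zero
  | .elm u v h => .elm (liftL u) (liftL v)
      (by rw [liftL_rng, liftL_rng, h])

theorem liftRG_inj : Function.Injective (liftRG (Q₁ := Q₁) (Q₂ := Q₂)) := by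
  intro x y h
  cases x <;> cases y <;> simp only [liftRG] at h
  · rfl
  · exact absurd h.symm elm_ne_zero
  · exact absurd h elm_ne_zero
  · simp only [GIS.elm.injEq] at h
    exact elm_ext (liftR_inj h.1) (liftR_inj h.2)

theorem liftLG_inj : Function.Injective (liftLG (Q₁ := Q₁) (Q₂ := Q₂)) := by
  intro x y h
  cases x <;> cases y <;> simp only [liftLG] at h
  · rfl
  · exact absurd h.symm elm_ne_zero
  · exact absurd h elm_ne_zero
  · simp only [GIS.elm.injEq] at h
    exact elm_ext (liftL_inj h.1) (liftL_inj h.2)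

theorem notLeft_infinite [h2 : Infinite (GIS Q₂)] :
    {x : GIS (dUnion Q₁ Q₂) | ¬ inLeft Q₁ Q₂ x}.Infinite := by
  have h0 : ({(0 : GIS Q₂)}ᶜ : Set (GIS Q₂)).Infinite :=
    (Set.finite_singleton _).infinite_compl
  have himg := h0.image ((liftRG_inj (Q₁ := Q₁) (Q₂ := Q₂)).injOn)
  refine himg.mono ?_
  rintro y ⟨x, hx, rfl⟩
  cases x with
  | zero => exact absurd rfl hx
  | elm u v h =>
    rintro ⟨a, ha⟩
    cases ha

theorem leftNZ_infinite [h1 : Infinite (GIS Q₁)] :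
    {x : GIS (dUnion Q₁ Q₂) | inLeft Q₁ Q₂ x ∧ x ≠ 0}.Infinite := by
  have h0 : ({(0 : GIS Q₁)}ᶜ : Set (GIS Q₁)).Infinite :=
    (Set.finite_singleton _).infinite_compl
  have himg := h0.image ((liftLG_inj (Q₁ := Q₁) (Q₂ := Q₂)).injOn)
  refine himg.mono ?_
  rintro y ⟨x, hx, rfl⟩
  cases x with
  | zero => exact absurd rfl hx
  | elm u v h => exact ⟨⟨u.start, rfl⟩, elm_ne_zero⟩

theorem stmt14 (Q₁ Q₂ : DGraph) (h1 : Infinite (GIS Q₁)) (h2 : Infinite (GIS Q₂)) :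
    @T2Space _ (dTop Q₁ Q₂) ∧ @LocallyCompactSpace _ (dTop Q₁ Q₂) ∧
    ¬ @CompactSpace _ (dTop Q₁ Q₂) ∧ dTop Q₁ Q₂ ≠ ⊥ ∧
    (∀ a : GIS (dUnion Q₁ Q₂),
      @Continuous _ _ (dTop Q₁ Q₂) (dTop Q₁ Q₂) (fun x => a * x) ∧
      @Continuous _ _ (dTop Q₁ Q₂) (dTop Q₁ Q₂) (fun x => x * a)) ∧
    @Continuous _ _ (dTop Q₁ Q₂) (dTop Q₁ Q₂) GIS.inv := by
  classical
  haveI := h1; haveI := h2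
  letI : TopologicalSpace (GIS (dUnion Q₁ Q₂)) := dTop Q₁ Q₂
  have hopen : ∀ U : Set (GIS (dUnion Q₁ Q₂)),
      ((0 : GIS (dUnion Q₁ Q₂)) ∈ U → {x | inLeft Q₁ Q₂ x ∧ x ∉ U}.Finite) → IsOpen U :=
    fun _ h => h
  have hopen' : ∀ U : Set (GIS (dUnion Q₁ Q₂)), IsOpen U →
      ((0 : GIS (dUnion Q₁ Q₂)) ∈ U → {x | inLeft Q₁ Q₂ x ∧ x ∉ U}.Finite) :=
    fun _ h => h
  have hsing : ∀ x : GIS (dUnion Q₁ Q₂), x ≠ 0 → IsOpen {x} := by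
    intro x hx
    apply hopen
    intro h0
    exact absurd (Set.eq_of_mem_singleton h0).symm hx
  have hcompl : ∀ x : GIS (dUnion Q₁ Q₂), IsOpen {x}ᶜ := by
    intro x
    apply hopen
    intro _
    refine (Set.finite_singleton x).subset ?_
    rintro y ⟨_, hy⟩
    exact not_not.mp hy
  -- continuity of inversion
  have hinvc : Continuous (GIS.inv : GIS (dUnion Q₁ Q₂) → GIS (dUnion Q₁ Q₂)) := by
    rw [continuous_def]
    intro U hU
    apply hopen
    intro h0
    have h0U : (0 : GIS (dUnion Q₁ Q₂)) ∈ U := h0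
    refine ((hopen' U hU h0U).image GIS.inv).subset ?_
    rintro x ⟨hl, hx⟩
    exact ⟨x.inv, ⟨(inLeft_inv x).mpr hl, hx⟩, inv_inv' x⟩
  -- left multiplication
  have key : ∀ b : GIS (dUnion Q₁ Q₂), Continuous (fun x => b * x) := by
    intro b
    rw [continuous_def]
    intro U hU
    apply hopen
    intro h0
    have h0U : (0 : GIS (dUnion Q₁ Q₂)) ∈ U := by
      have : b * 0 ∈ U := h0
      rwa [mul_zero'] at this
    cases b with
    | zero =>
      refine Set.finite_empty.subset ?_
      rintro x ⟨hl, hx⟩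
      exact hx (show GIS.zero * x ∈ U by rw [zmul]; exact h0U)
    | elm u₁ v₁ h₁ =>
      have hF := hopen' U hU h0U
      refine (hF.biUnion (fun p hp =>
        fiber_finite (GIS.elm u₁ v₁ h₁) p (fun e => hp.2 (e ▸ h0U)))).subset ?_
      rintro x ⟨hl, hx⟩
      have hxU : GIS.elm u₁ v₁ h₁ * x ∉ U := hx
      have hLp : inLeft Q₁ Q₂ (GIS.elm u₁ v₁ h₁ * x) := inLeft_mul _ _ hl
      exact Set.mem_biUnion ⟨hLp, hxU⟩ rfl
  refine ⟨?_, ?_, ?_, ?_, ?_, hinvc⟩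
  · -- T2
    constructor
    intro a b hab
    by_cases ha : a = 0
    · subst ha
      have hb : b ≠ 0 := Ne.symm hab
      exact ⟨{b}ᶜ, {b}, hcompl b, hsing b hb, fun h => hab (Set.eq_of_mem_singleton h),
        rfl, disjoint_compl_left⟩
    · by_cases hb : b = 0
      · subst hb
        exact ⟨{a}, {a}ᶜ, hsing a ha, hcompl a, rfl,
          fun h => ha (Set.eq_of_mem_singleton h).symm, disjoint_compl_right⟩
      · exact ⟨{a}, {b}, hsing a ha, hsing b hb, rfl, rfl,
          Set.disjoint_singleton.mpr hab⟩
  · -- locally compact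
    constructor
    intro x n hn
    by_cases hx : x = 0
    · subst hx
      obtain ⟨U, hUn, hU, h0U⟩ := mem_nhds_iff.mp hn
      set K : Set (GIS (dUnion Q₁ Q₂)) := insert 0 (U ∩ {y | inLeft Q₁ Q₂ y}) with hK
      have hKopen : IsOpen K := by
        apply hopen
        intro _
        refine (hopen' U hU h0U).subset ?_
        rintro y ⟨hl, hy⟩
        exact ⟨hl, fun hyU => hy (Set.mem_insert_of_mem _ ⟨hyU, hl⟩)⟩
      refine ⟨K, hKopen.mem_nhds (Set.mem_insert _ _), ?_, ?_⟩
      · rintro y (rfl | ⟨hyU, _⟩)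
        · exact hUn h0U
        · exact hUn hyU
      · apply isCompact_of_finite_subcover
        intro ι c hc hcov
        obtain ⟨i₀, hi₀⟩ := Set.mem_iUnion.mp (hcov (Set.mem_insert _ _))
        have hD : {y | inLeft Q₁ Q₂ y ∧ y ∉ c i₀}.Finite := hopen' _ (hc i₀) hi₀
        set f : GIS (dUnion Q₁ Q₂) → ι := fun y =>
          if h : ∃ i, y ∈ c i then h.choose else i₀ with hf
        refine ⟨insert i₀ (hD.toFinset.image f), ?_⟩
        intro y hyK
        by_cases hy0 : y ∈ c i₀
        · exact Set.mem_biUnion (Finset.mem_insert_self _ _) hy0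
        · have hyl : inLeft Q₁ Q₂ y := by
            rcases hyK with rfl | ⟨_, hl⟩
            · exact absurd hi₀ hy0
            · exact hl
          have hex : ∃ i, y ∈ c i := Set.mem_iUnion.mp (hcov hyK)
          have hyf : y ∈ c (f y) := by
            rw [hf]; simp only [dif_pos hex]; exact hex.choose_spec
          refine Set.mem_biUnion ?_ hyf
          exact Finset.mem_insert_of_mem (Finset.mem_image_of_mem f
            (hD.mem_toFinset.mpr ⟨hyl, hy0⟩))
    · refine ⟨{x}, (hsing x hx).mem_nhds rfl, ?_, isCompact_singleton⟩
      simp only [Set.singleton_subset_iff]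
      exact mem_of_mem_nhds hn
  · -- not compact
    intro hcs
    have hcpt : IsCompact (Set.univ : Set (GIS (dUnion Q₁ Q₂))) := hcs.isCompact_univ
    obtain ⟨t, ht⟩ := hcpt.elim_finite_subcover
      (fun x : GIS (dUnion Q₁ Q₂) => {y | inLeft Q₁ Q₂ y} ∪ {x})
      (fun x => hopen _ (fun _ => Set.finite_empty.subset
        (fun y hy => absurd (Or.inl hy.1) hy.2)))
      (fun y _ => Set.mem_iUnion.mpr ⟨y, Or.inr rfl⟩)
    have hsub : {y : GIS (dUnion Q₁ Q₂) | ¬ inLeft Q₁ Q₂ y} ⊆ ↑t := by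
      intro y hy
      obtain ⟨i, hit, hyi⟩ := Set.mem_iUnion₂.mp (ht (Set.mem_univ y))
      rcases hyi with h | h
      · exact absurd h hy
      · exact (Set.eq_of_mem_singleton h) ▸ hit
    exact notLeft_infinite (t.finite_toSet.subset hsub)
  · -- not discrete
    intro hbot
    have h' : (dTop Q₁ Q₂).IsOpen {0} := by
      rw [hbot]
      exact @isOpen_discrete _ ⊥ (@DiscreteTopology.mk _ ⊥ rfl) _
    have hfin := h' rfl
    exact leftNZ_infinite (Q₁ := Q₁) (Q₂ := Q₂) hfin
  · -- multiplication separately continuous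
    intro a
    refine ⟨key a, ?_⟩
    have heq : (fun x : GIS (dUnion Q₁ Q₂) => x * a)
        = GIS.inv ∘ (fun y => a.inv * y) ∘ GIS.inv := by
      funext x
      simp only [Function.comp]
      rw [← gmul_inv, inv_inv']
    rw [heq]
    exact hinvc.comp ((key a.inv).comp hinvc)
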